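/- For every $k \ge 0$ and all reals $0 \le x \le y$, $|f_k(x) - f_k(y)| \le (\mathbf{1}\{x \le 2k\} + f_k(x))\,(y - x)$, where $f_k(u) = e^{-u} u^k / k!$. -/

import Mathlib

private lemma fk_le_one (j : ℕ) (u : ℝ) (hu : 0 ≤ u) :
    Real.exp (-u) * u ^ j / (Nat.factorial j) ≤ 1 := by
  have h1 : u ^ j / (Nat.factorial j) ≤ Real.exp u := by
    calc u ^ j / (Nat.factorial j)
        ≤ ∑ i ∈ Finset.range (j+1), u ^ i / (Nat.factorial i) := by
          apply Finset.single_le_sum (f := fun i => u ^ i / (Nat.factorial i : ℝ))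
          · intro i _; positivity
          · simp
      _ ≤ Real.exp u := Real.sum_le_exp_of_nonneg hu (j+1)
  have h2 : Real.exp (-u) * u ^ j / (Nat.factorial j)
      = (u ^ j / (Nat.factorial j)) * Real.exp (-u) := by ring
  rw [h2]
  calc (u ^ j / (Nat.factorial j)) * Real.exp (-u)
      ≤ Real.exp u * Real.exp (-u) := by
        exact mul_le_mul_of_nonneg_right h1 (Real.exp_nonneg _)
    _ = 1 := by rw [← Real.exp_add]; simp

private lemma fk_lipschitz (k : ℕ) (x y : ℝ) (hx : 0 ≤ x) (hxy : x ≤ y) :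
    |Real.exp (-x) * x ^ k / (Nat.factorial k) - Real.exp (-y) * y ^ k / (Nat.factorial k)|
      ≤ y - x := by
  have hy : (0:ℝ) ≤ y := hx.trans hxy
  set f : ℝ → ℝ := fun u => Real.exp (-u) * u ^ k / (Nat.factorial k) with hf
  set g : ℝ → ℝ := fun u =>
    (-Real.exp (-u) * u ^ k + Real.exp (-u) * (k * u ^ (k-1))) / (Nat.factorial k) with hg
  have hderiv : ∀ u ∈ Set.Ici (0:ℝ), HasDerivWithinAt f (g u) (Set.Ici 0) u := by
    intro u _
    have h1 : HasDerivAt (fun u : ℝ => Real.exp (-u)) (-Real.exp (-u)) u := by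
      exact ((Real.hasDerivAt_exp (-u)).comp u (hasDerivAt_neg u)).congr_deriv (by simp)
    have h2 : HasDerivAt (fun u : ℝ => u ^ k) ((k:ℝ) * u ^ (k-1)) u := hasDerivAt_pow k u
    exact ((h1.mul h2).div_const (Nat.factorial k : ℝ)).hasDerivWithinAt
  have hbound : ∀ u ∈ Set.Ici (0:ℝ), ‖g u‖ ≤ 1 := by
    intro u hu
    have hu0 : (0:ℝ) ≤ u := hu
    have hA : Real.exp (-u) * u ^ k / (Nat.factorial k) ≤ 1 := fk_le_one k u hu0
    have hA0 : 0 ≤ Real.exp (-u) * u ^ k / (Nat.factorial k) := by positivity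
    have hB : Real.exp (-u) * ((k:ℝ) * u ^ (k-1)) / (Nat.factorial k) ≤ 1 := by
      cases k with
      | zero => simp
      | succ m =>
        have heq : Real.exp (-u) * (((m+1:ℕ):ℝ) * u ^ (m+1-1)) / (Nat.factorial (m+1))
            = Real.exp (-u) * u ^ m / (Nat.factorial m) := by
          rw [Nat.factorial_succ]
          have hm : (Nat.factorial m : ℝ) ≠ 0 := by positivity
          push_cast
          field_simp
        rw [heq]
        exact fk_le_one m u hu0
    have hB0 : 0 ≤ Real.exp (-u) * ((k:ℝ) * u ^ (k-1)) / (Nat.factorial k) := by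
      have := pow_nonneg hu0 (k-1)
      positivity
    have heq : g u = Real.exp (-u) * ((k:ℝ) * u ^ (k-1)) / (Nat.factorial k)
        - Real.exp (-u) * u ^ k / (Nat.factorial k) := by
      simp only [hg]; ring
    rw [Real.norm_eq_abs, heq, abs_sub_le_iff]
    constructor <;> linarith
  have key := (convex_Ici (0:ℝ)).norm_image_sub_le_of_norm_hasDerivWithin_le
    hderiv hbound (Set.mem_Ici.2 hx) (Set.mem_Ici.2 hy)
  rw [Real.norm_eq_abs, Real.norm_eq_abs, one_mul] at key
  rw [abs_sub_comm]
  calc |f y - f x| ≤ |y - x| := key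
    _ = y - x := abs_of_nonneg (by linarith)

theorem poisson_density_lipschitz_bound (k : ℕ) (x y : ℝ) (hx : 0 ≤ x) (hxy : x ≤ y) :
    |Real.exp (-x) * x ^ k / (Nat.factorial k) - Real.exp (-y) * y ^ k / (Nat.factorial k)| ≤
      ((if x ≤ 2 * k then (1 : ℝ) else 0) + Real.exp (-x) * x ^ k / (Nat.factorial k)) * (y - x) := by
  have hy : (0:ℝ) ≤ y := hx.trans hxy
  have hfx0 : 0 ≤ Real.exp (-x) * x ^ k / (Nat.factorial k) := by positivity
  by_cases hcase : x ≤ 2 * k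
  · rw [if_pos hcase]
    have h1 := fk_lipschitz k x y hx hxy
    nlinarith [mul_nonneg hfx0 (sub_nonneg.2 hxy)]
  · rw [if_neg hcase]
    push_neg at hcase
    have hx0 : 0 < x := lt_of_le_of_lt (by positivity) hcase
    have hkx : (k:ℝ) ≤ x := by
      have : (0:ℝ) ≤ (k:ℝ) := Nat.cast_nonneg k
      linarith
    -- y^k ≤ x^k * exp(y-x)
    have hyk : y ^ k ≤ x ^ k * Real.exp (y - x) := by
      have h1 : y ≤ x * Real.exp ((y - x)/x) := by
        have h2 : 1 + (y-x)/x ≤ Real.exp ((y-x)/x) := by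
          linarith [Real.add_one_le_exp ((y-x)/x)]
        have h3 : x * (1 + (y-x)/x) = y := by field_simp; ring
        nlinarith [mul_le_mul_of_nonneg_left h2 hx0.le]
      calc y ^ k ≤ (x * Real.exp ((y-x)/x)) ^ k := pow_le_pow_left₀ hy h1 k
        _ = x ^ k * Real.exp ((k:ℝ) * ((y-x)/x)) := by
            rw [mul_pow, ← Real.exp_nat_mul]
        _ ≤ x ^ k * Real.exp (y - x) := by
            apply mul_le_mul_of_nonneg_left _ (pow_nonneg hx0.le k)
            apply Real.exp_le_exp.2
            rw [mul_div_assoc', div_le_iff₀ hx0]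
            nlinarith
    -- f(y) ≤ f(x)
    have hfyfx : Real.exp (-y) * y ^ k / (Nat.factorial k)
        ≤ Real.exp (-x) * x ^ k / (Nat.factorial k) := by
      have heq : Real.exp (-y) * (x ^ k * Real.exp (y-x)) = Real.exp (-x) * x ^ k := by
        rw [mul_comm (x ^ k) (Real.exp (y-x)), ← mul_assoc, ← Real.exp_add]
        ring_nf
      have h2 : Real.exp (-y) * y ^ k ≤ Real.exp (-x) * x ^ k := by
        calc Real.exp (-y) * y ^ k ≤ Real.exp (-y) * (x ^ k * Real.exp (y-x)) :=
              mul_le_mul_of_nonneg_left hyk (Real.exp_nonneg _)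
          _ = Real.exp (-x) * x ^ k := heq
      gcongr
    -- lower bound: f(x) * exp(x-y) ≤ f(y)
    have hlow : Real.exp (-x) * x ^ k / (Nat.factorial k) * Real.exp (x - y)
        ≤ Real.exp (-y) * y ^ k / (Nat.factorial k) := by
      have hxk : x ^ k ≤ y ^ k := pow_le_pow_left₀ hx hxy k
      have heq : Real.exp (-x) * x ^ k / (Nat.factorial k) * Real.exp (x - y)
          = Real.exp (-y) * x ^ k / (Nat.factorial k) := by
        rw [div_mul_eq_mul_div, mul_right_comm, ← Real.exp_add]
        ring_nf
      rw [heq]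
      gcongr
    have hexp : 1 - (y - x) ≤ Real.exp (x - y) := by
      linarith [Real.add_one_le_exp (x - y)]
    rw [abs_of_nonneg (by linarith)]
    have := mul_le_mul_of_nonneg_left hexp hfx0
    nlinarith
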